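/- Let α ∈ (0,1), let X, X' be independent positive random variables with E[X^q] = Γ(q+1)/Γ(αq+1) and E[(X')^q] = Γ(q+1)/Γ(βq+1) for all q ≥ 0, where β ∈ (0,1). Then the random variable X^{β} · X' satisfies E[(X^{β} X')^q] = Γ(q+1)/Γ(αβ q + 1) for all q ≥ 0. -/

import Mathlib

open MeasureTheory ProbabilityTheory

/-- Semigroup property of Mittag-Leffler Mellin transforms: if `X, X'` are independent
positive random variables with `E[X^q] = Γ(q+1)/Γ(αq+1)` and
`E[(X')^q] = Γ(q+1)/Γ(βq+1)` for all `q ≥ 0`, with `α, β ∈ (0,1)`, then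
`E[(X^β X')^q] = Γ(q+1)/Γ(αβq+1)` for all `q ≥ 0`. -/
theorem stmt_16 {Ω : Type*} [MeasurableSpace Ω] (P : Measure Ω) [IsProbabilityMeasure P]
    (α β : ℝ) (hα : α ∈ Set.Ioo (0:ℝ) 1) (hβ : β ∈ Set.Ioo (0:ℝ) 1)
    (X X' : Ω → ℝ) (hXm : Measurable X) (hX'm : Measurable X')
    (hXpos : ∀ ω, 0 < X ω) (hX'pos : ∀ ω, 0 < X' ω)
    (hX : ∀ q : ℝ, 0 ≤ q → ∫ ω, X ω ^ q ∂P = Real.Gamma (q + 1) / Real.Gamma (α * q + 1))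
    (hX' : ∀ q : ℝ, 0 ≤ q →
      ∫ ω, X' ω ^ q ∂P = Real.Gamma (q + 1) / Real.Gamma (β * q + 1))
    (hindep : IndepFun X X' P) :
    ∀ q : ℝ, 0 ≤ q →
      ∫ ω, (X ω ^ β * X' ω) ^ q ∂P =
        Real.Gamma (q + 1) / Real.Gamma (α * β * q + 1) := by
  intro q hq
  have hβq : 0 ≤ β * q := mul_nonneg hβ.1.le hq
  have h1 : ∀ ω, (X ω ^ β * X' ω) ^ q = X ω ^ (β * q) * X' ω ^ q := by
    intro ω
    rw [Real.mul_rpow (Real.rpow_nonneg (hXpos ω).le β) (hX'pos ω).le,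
      Real.rpow_mul (hXpos ω).le]
  simp_rw [h1]
  have hm1 : Measurable (fun x : ℝ => x ^ (β * q)) := by measurability
  have hm2 : Measurable (fun x : ℝ => x ^ q) := by measurability
  have hind2 : IndepFun (fun ω => X ω ^ (β * q)) (fun ω => X' ω ^ q) P :=
    hindep.comp hm1 hm2
  rw [hind2.integral_fun_mul_eq_mul_integral (hm1.comp hXm).aestronglyMeasurable
      (hm2.comp hX'm).aestronglyMeasurable]
  rw [hX (β * q) hβq, hX' q hq]
  have hpos : 0 < Real.Gamma (β * q + 1) := Real.Gamma_pos_of_pos (by linarith)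
  have h : α * (β * q) = α * β * q := by ring
  rw [h, div_mul_div_comm, mul_comm (Real.Gamma (β * q + 1)),
    mul_div_mul_right _ _ hpos.ne']
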